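/- arXiv:2506.00414 — 2 statements merged into one kernel-verified Lean document; each statement's English description precedes it below -/
import Mathlib

section
/- Let k ≥ 2 and let G be the join of K_1 with k disjoint copies of K_2; concretely, G has vertex set {c} ∪ {x_1, y_1, …, x_k, y_k}, the vertex c is adjacent to all other vertices, x_i is adjacent to y_i for each i ∈ [k], and there are no other edges. Then the set W = {x_1, …, x_k} of size k is a local resolving set of G. -/
/-- A set `W` of vertices is a local resolving set of `G` if every pair of
adjacent vertices lying outside `W` is distinguished by some vertex of `W`. -/
def IsLocalResolvingSet {V : Type*} (G : SimpleGraph V) (W : Set V) : Prop :=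
  ∀ u v : V, G.Adj u v → u ∉ W → v ∉ W → ∃ w ∈ W, G.dist u w ≠ G.dist v w

/-- The join of `K_1` with `k` disjoint copies of `K_2`: the vertex `none` is the
center `c`, and `some (i, 0)`, `some (i, 1)` are the vertices `x_i`, `y_i` of the
`i`-th copy of `K_2`.  The center is adjacent to every other vertex, `x_i` is
adjacent to `y_i`, and there are no other edges. -/
def joinK2 (k : ℕ) : SimpleGraph (Option (Fin k × Fin 2)) :=
  SimpleGraph.fromRel (fun u v =>
    u = none ∨ ∃ i : Fin k, u = some (i, 0) ∧ v = some (i, 1))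

lemma key (k : ℕ) (hk : 2 ≤ k) (i : Fin k) :
    ∃ w ∈ ↑(Finset.image (fun i : Fin k => (some (i, 0) : Option (Fin k × Fin 2)))
        Finset.univ),
      (joinK2 k).dist none w ≠ (joinK2 k).dist (some (i, 1)) w := by
  have : 1 < Fintype.card (Fin k) := by simp; omega
  obtain ⟨j, hj⟩ := Fintype.exists_ne_of_one_lt_card this i
  refine ⟨some (j, 0), by simp, ?_⟩
  have h1 : (joinK2 k).dist none (some (j, 0)) = 1 := by
    rw [SimpleGraph.dist_eq_one_iff_adj]
    simp [joinK2]
  have h2 : ¬ (joinK2 k).Adj (some (i, 1)) (some (j, 0)) := by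
    simp only [joinK2, SimpleGraph.fromRel_adj]
    rintro ⟨-, (h | ⟨m, hm1, hm2⟩) | (h | ⟨m, hm1, hm2⟩)⟩
    · simp at h
    · simp at hm1
    · simp at h
    · simp only [Option.some_inj, Prod.mk.injEq] at hm1 hm2
      exact hj (hm1.1.symm ▸ hm2.1.symm)
  rw [h1]
  intro h
  exact h2 (SimpleGraph.dist_eq_one_iff_adj.mp h.symm)

theorem xs_isLocalResolvingSet (k : ℕ) (hk : 2 ≤ k) :
    (Finset.image (fun i : Fin k => (some (i, 0) : Option (Fin k × Fin 2)))
        Finset.univ).card = k ∧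
    IsLocalResolvingSet (joinK2 k)
      ↑(Finset.image (fun i : Fin k => (some (i, 0) : Option (Fin k × Fin 2)))
        Finset.univ) := by
  constructor
  · rw [Finset.card_image_of_injective _ (fun a b h => by simpa using h)]
    simp
  · intro u v hadj hu hv
    simp only [Finset.coe_image, Finset.coe_univ, Set.image_univ, Set.mem_range,
      not_exists] at hu hv
    have hadj' := hadj
    rw [joinK2, SimpleGraph.fromRel_adj] at hadj'
    obtain ⟨hne, (hu0 | ⟨m, hm1, hm2⟩) | (hv0 | ⟨m, hm1, hm2⟩)⟩ := hadj'
    · -- u = none, v = some (i, b) with b ≠ 0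
      subst hu0
      obtain (_ | ⟨i, b⟩) := v
      · exact absurd rfl hne
      · have hb : b = 1 := by
          fin_cases b
          · exact absurd rfl (hv i)
          · rfl
        subst hb
        exact key k hk i
    · exact absurd hm1.symm (hu m)
    · subst hv0
      obtain (_ | ⟨i, b⟩) := u
      · exact absurd rfl hne
      · have hb : b = 1 := by
          fin_cases b
          · exact absurd rfl (hu i)
          · rfl
        subst hb
        obtain ⟨w, hw, h⟩ := key k hk i
        exact ⟨w, hw, fun h' => h h'.symm⟩
    · exact absurd hm1.symm (hv m)
end

section
/- Let k ≥ 2 and let G be the join of K_1 with k disjoint copies of K_2; concretely, G has vertex set {c} ∪ {x_1, y_1, …, x_k, y_k}, the vertex c is adjacent to all other vertices, x_i is adjacent to y_i for each i ∈ [k], and there are no other edges. Then every local resolving set of G contains at least one of x_i, y_i for each i ∈ [k], and hence has cardinality at least k. Consequently dim_l(G) = k = ⌊n(G)/2⌋, where n(G) = 2k + 1. -/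
/-- The local metric dimension of a finite graph: the minimum cardinality of a
local resolving set. -/
noncomputable def localMetricDim {V : Type*} [Fintype V] (G : SimpleGraph V) : ℕ :=
  sInf {n | ∃ W : Finset V, IsLocalResolvingSet G ↑W ∧ W.card = n}

section aux
variable {k : ℕ}

private lemma adjNone (p : Fin k × Fin 2) : (joinK2 k).Adj none (some p) := by
  rw [joinK2, SimpleGraph.fromRel_adj]
  exact ⟨by simp, Or.inl (Or.inl rfl)⟩

private lemma adjPair (i : Fin k) : (joinK2 k).Adj (some (i,0)) (some (i,1)) := by
  rw [joinK2, SimpleGraph.fromRel_adj]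
  exact ⟨by simp, Or.inl (Or.inr ⟨i, rfl, rfl⟩)⟩

private lemma notAdj {i j : Fin k} (h : i ≠ j) (b c : Fin 2) :
    ¬ (joinK2 k).Adj (some (i,b)) (some (j,c)) := by
  rw [joinK2, SimpleGraph.fromRel_adj]
  rintro ⟨-, (⟨h1, -⟩ | ⟨m, h1, h2⟩) | (h1 | ⟨m, h1, h2⟩)⟩ <;> simp_all

private lemma distNone (p : Fin k × Fin 2) : (joinK2 k).dist none (some p) = 1 :=
  SimpleGraph.dist_eq_one_iff_adj.mpr (adjNone p)

private lemma distSome {i j : Fin k} (h : i ≠ j) (b c : Fin 2) :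
    (joinK2 k).dist (some (i,b)) (some (j,c)) = 2 := by
  have hle : (joinK2 k).dist (some (i,b)) (some (j,c)) ≤ 2 := by
    simpa using SimpleGraph.dist_le (SimpleGraph.Walk.cons ((adjNone (i,b)).symm)
      (SimpleGraph.Walk.cons (adjNone (j,c)) SimpleGraph.Walk.nil))
  have hw : (joinK2 k).Walk (some (i,b)) (some (j,c)) :=
    SimpleGraph.Walk.cons ((adjNone (i,b)).symm)
      (SimpleGraph.Walk.cons (adjNone (j,c)) SimpleGraph.Walk.nil)
  have h0 : (joinK2 k).dist (some (i,b)) (some (j,c)) ≠ 0 := by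
    rw [ne_eq, SimpleGraph.dist_eq_zero_iff_eq_or_not_reachable]
    push_neg
    exact ⟨by simp [h], ⟨hw⟩⟩
  have h1 : (joinK2 k).dist (some (i,b)) (some (j,c)) ≠ 1 := by
    rw [ne_eq, SimpleGraph.dist_eq_one_iff_adj]
    exact notAdj h b c
  omega

end aux

theorem localMetricDim_joinK2 (k : ℕ) (hk : 2 ≤ k) :
    (∀ W : Set (Option (Fin k × Fin 2)), IsLocalResolvingSet (joinK2 k) W →
      ∀ i : Fin k, (some (i, 0)) ∈ W ∨ (some (i, 1)) ∈ W) ∧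
    (∀ W : Finset (Option (Fin k × Fin 2)), IsLocalResolvingSet (joinK2 k) ↑W →
      k ≤ W.card) ∧
    localMetricDim (joinK2 k) = k ∧
    Fintype.card (Option (Fin k × Fin 2)) = 2 * k + 1 ∧
    k = Fintype.card (Option (Fin k × Fin 2)) / 2 := by
  have A : ∀ W : Set (Option (Fin k × Fin 2)), IsLocalResolvingSet (joinK2 k) W →
      ∀ i : Fin k, (some (i, 0)) ∈ W ∨ (some (i, 1)) ∈ W := by
    intro W hW i
    by_contra hc
    push_neg at hc
    obtain ⟨w, hwW, hne⟩ := hW _ _ (adjPair i) hc.1 hc.2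
    apply hne
    match w with
    | none =>
      rw [SimpleGraph.dist_comm, distNone, SimpleGraph.dist_comm, distNone]
    | some (j, b) =>
      have hij : i ≠ j := by
        rintro rfl
        fin_cases b
        · exact hc.1 hwW
        · exact hc.2 hwW
      rw [distSome hij, distSome hij]
  have B : ∀ W : Finset (Option (Fin k × Fin 2)), IsLocalResolvingSet (joinK2 k) ↑W →
      k ≤ W.card := by
    intro W hW
    have hex : ∀ i : Fin k, ∃ b : Fin 2, some (i, b) ∈ W := by
      intro i
      rcases A ↑W hW i with h | h
      exacts [⟨0, h⟩, ⟨1, h⟩]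
    choose f hf using hex
    have hinj : Function.Injective fun i : Fin k => (⟨some (i, f i), hf i⟩ : W) := by
      intro a b hab
      have := congrArg Subtype.val hab
      simp only [Option.some.injEq, Prod.mk.injEq] at this
      exact this.1
    calc k = Fintype.card (Fin k) := (Fintype.card_fin k).symm
      _ ≤ Fintype.card W := Fintype.card_le_of_injective _ hinj
      _ = W.card := Fintype.card_coe W
  refine ⟨A, B, ?_, ?_, ?_⟩
  · -- localMetricDim = k
    set W0 : Finset (Option (Fin k × Fin 2)) :=
      Finset.univ.image (fun i : Fin k => (some (i, 0) : Option (Fin k × Fin 2))) with hW0def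
    have hmemW0 : ∀ i : Fin k, some (i, (0 : Fin 2)) ∈ W0 := by
      intro i
      simp [hW0def]
    have hcard : W0.card = k := by
      rw [hW0def, Finset.card_image_of_injective _ (fun a b hab => by simpa using hab)]
      simp
    -- the key witness: for each j, a pair distinguishing none from some (j,1)
    have key : ∀ j : Fin k, ∃ w ∈ (↑W0 : Set (Option (Fin k × Fin 2))),
        (joinK2 k).dist none w ≠ (joinK2 k).dist (some (j, 1)) w := by
      intro j
      have : ∃ j' : Fin k, j' ≠ j := by
        by_cases h : j = ⟨0, by omega⟩
        · exact ⟨⟨1, by omega⟩, by simp [h, Fin.ext_iff]⟩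
        · exact ⟨⟨0, by omega⟩, fun hc => h hc.symm⟩
      obtain ⟨j', hj'⟩ := this
      refine ⟨some (j', 0), by simpa using hmemW0 j', ?_⟩
      rw [distNone, distSome (Ne.symm hj')]
      omega
    have hres : IsLocalResolvingSet (joinK2 k) ↑W0 := by
      intro u v huv hu hv
      rw [joinK2, SimpleGraph.fromRel_adj] at huv
      obtain ⟨hne, h | h⟩ := huv
      · rcases h with rfl | ⟨m, rfl, rfl⟩
        · match v, hne, hv with
          | none, hne, _ => exact absurd rfl hne
          | some (j, b), _, hv =>
            have hb : b = 1 := by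
              fin_cases b
              · exact absurd (by simpa using hmemW0 j) hv
              · rfl
            subst hb
            exact key j
        · exact absurd (by simpa using hmemW0 m) hu
      · rcases h with rfl | ⟨m, rfl, rfl⟩
        · match u, hne, hu with
          | none, hne, _ => exact absurd rfl hne
          | some (j, b), _, hu =>
            have hb : b = 1 := by
              fin_cases b
              · exact absurd (by simpa using hmemW0 j) hu
              · rfl
            subst hb
            obtain ⟨w, hw, hd⟩ := key j
            exact ⟨w, hw, hd.symm⟩
        · exact absurd (by simpa using hmemW0 m) hv
    have hmem : k ∈ {n | ∃ W : Finset (Option (Fin k × Fin 2)),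
        IsLocalResolvingSet (joinK2 k) ↑W ∧ W.card = n} := ⟨W0, hres, hcard⟩
    refine le_antisymm (Nat.sInf_le hmem) ?_
    obtain ⟨W, hW, hc⟩ := Nat.sInf_mem (⟨k, hmem⟩ : Set.Nonempty _)
    rw [localMetricDim, ← hc]
    exact B W hW
  · simp [Fintype.card_option, Fintype.card_prod]
    omega
  · simp [Fintype.card_option, Fintype.card_prod]
    omega
end
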